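/- With the first-order rogue wave construction of the context (λ0 purely imaginary with Im(λ0) > 0, so ζ > 0 and every a_j > 0), the value 1 + (n+1)·√n / (Σ_{j=1}^n 1/sin(ω_j)) is the greatest element of the set of values ‖q^{[1]}_β(x,t)‖₁ / ‖a‖₁, where β ranges over all vectors of ℂ^{n+1} linearly independent from ξ_0 and (x,t) ranges over ℝ²; here ‖q^{[1]}_β(x,t)‖₁ = Σ_{j=1}^n |q_j^{[1]}(x,t)| and ‖a‖₁ = Σ_{j=1}^n a_j. Moreover this greatest value is attained at β = η = (√n, i, i, …, i)ᵀ and (x,t) = (0,0). -/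

import Mathlib

open Complex Matrix Finset

noncomputable section

/-- Index type for `(n+1)×(n+1)` matrices: a `1`-block plus an `n`-block. -/
abbrev Idx (n : ℕ) := Fin 1 ⊕ Fin n

/-- `ζ = 2·Im(λ0)/(n+1)`. -/
def zeta (n : ℕ) (l0 : ℂ) : ℝ := 2 * l0.im / (n + 1)

/-- `ω_j = jπ/(n+1)`. -/
def om (n j : ℕ) : ℝ := j * Real.pi / (n + 1)

/-- `a_j = ζ·csc(ω_j)` for `j = 1,…,n` (indexed by `j : Fin n` as `j+1`). -/
def aa (n : ℕ) (l0 : ℂ) (j : Fin n) : ℝ := zeta n l0 / Real.sin (om n ((j : ℕ) + 1))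

/-- `b_j = ζ·cot(ω_j) − 2·Re(λ0)` for `j = 1,…,n`. -/
def bb (n : ℕ) (l0 : ℂ) (j : Fin n) : ℝ :=
  zeta n l0 * (Real.cos (om n ((j : ℕ) + 1)) / Real.sin (om n ((j : ℕ) + 1))) - 2 * l0.re

/-- `z0 = 2·Re(λ0) + i·ζ`. -/
def zz0 (n : ℕ) (l0 : ℂ) : ℂ := 2 * l0.re + Complex.I * zeta n l0

/-- The `(n+1)×(n+1)` matrix `B` with `(1,1)` entry `i·n·ζ`, first row/column entries `a_j`,
diagonal entries `−(z0 + b_j)` and all other entries `0`. -/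
def Bmat (n : ℕ) (l0 : ℂ) : Matrix (Idx n) (Idx n) ℂ :=
  Matrix.fromBlocks
    (Matrix.of fun _ _ => Complex.I * n * zeta n l0)
    (Matrix.of fun _ j => (aa n l0 j : ℂ))
    (Matrix.of fun i _ => (aa n l0 i : ℂ))
    (Matrix.diagonal fun j => -(zz0 n l0 + (bb n l0 j : ℂ)))

/-- The vector `ξ_0 = (1, a_1/(z0+b_1), …, a_n/(z0+b_n))ᵀ`. -/
def xi0 (n : ℕ) (l0 : ℂ) : Idx n → ℂ :=
  Sum.elim (fun _ => 1)
    (fun k : Fin n => (aa n l0 k : ℂ) / (zz0 n l0 + (bb n l0 k : ℂ)))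

/-- The matrix polynomial
`A(x,t) = Σ_{s=0}^{n} Σ_{k=0}^{⌊n/2⌋} (i^{s+k}/(2^k s! k!)) B^{s+2k} (x+z0 t)^s t^k`. -/
def Amat (n : ℕ) (l0 : ℂ) (x t : ℝ) : Matrix (Idx n) (Idx n) ℂ :=
  ∑ s ∈ Finset.range (n + 1), ∑ k ∈ Finset.range (n / 2 + 1),
    ((Complex.I ^ (s + k) * ((x : ℂ) + zz0 n l0 * (t : ℂ)) ^ s * (t : ℂ) ^ k) /
        ((2 : ℂ) ^ k * (Nat.factorial s : ℂ) * (Nat.factorial k : ℂ))) •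
      (Bmat n l0) ^ (s + 2 * k)

/-- The plane-wave phase `θ_j(x,t) = b_j x − (b_j²/2 − Σ_k a_k²) t`. -/
def theta (n : ℕ) (l0 : ℂ) (j : Fin n) (x t : ℝ) : ℝ :=
  bb n l0 j * x - ((bb n l0 j) ^ 2 / 2 - ∑ k, (aa n l0 k) ^ 2) * t

/-- The plane-wave background `q_j^{bg}(x,t) = a_j e^{iθ_j(x,t)}`. -/
def qbg (n : ℕ) (l0 : ℂ) (j : Fin n) (x t : ℝ) : ℂ :=
  (aa n l0 j : ℂ) * Complex.exp (Complex.I * (theta n l0 j x t : ℝ))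

/-- The vector `w(x,t) = A(x,t)·β`. -/
def wvec (n : ℕ) (l0 : ℂ) (β : Idx n → ℂ) (x t : ℝ) : Idx n → ℂ :=
  (Amat n l0 x t).mulVec β

/-- The first-order rogue wave
`q_j^{[1]} = q_j^{bg}·(1 − 2i(n+1)ζ w_{j+1} conj(w_1)/(a_j ‖w‖²))`. -/
def q1 (n : ℕ) (l0 : ℂ) (β : Idx n → ℂ) (j : Fin n) (x t : ℝ) : ℂ :=
  qbg n l0 j x t *
    (1 - 2 * Complex.I * ((n : ℂ) + 1) * (zeta n l0 : ℝ) *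
        wvec n l0 β x t (Sum.inr j) * (starRingEnd ℂ) (wvec n l0 β x t (Sum.inl 0)) /
      ((aa n l0 j : ℂ) * ((∑ i, Complex.normSq (wvec n l0 β x t i) : ℝ) : ℂ)))

/-- The vector `η = (√n, i, i, …, i)ᵀ`. -/
def etaVec (n : ℕ) : Idx n → ℂ :=
  Sum.elim (fun _ => (Real.sqrt n : ℂ)) (fun _ => Complex.I)

lemma sin_om_pos (n : ℕ) (j : Fin n) : 0 < Real.sin (om n ((j : ℕ) + 1)) := by
  apply Real.sin_pos_of_pos_of_lt_pi
  · unfold om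
    positivity
  · unfold om
    rw [div_lt_iff₀ (by positivity)]
    have h1 : ((j : ℕ) + 1 : ℝ) < (n + 1 : ℝ) := by
      have := j.2
      exact_mod_cast Nat.add_lt_add_right this 1
    push_cast
    nlinarith [Real.pi_pos]

lemma zeta_pos (n : ℕ) (l0 : ℂ) (him : 0 < l0.im) : 0 < zeta n l0 := by
  unfold zeta; positivity

lemma aa_pos (n : ℕ) (l0 : ℂ) (him : 0 < l0.im) (j : Fin n) : 0 < aa n l0 j :=
  div_pos (zeta_pos n l0 him) (sin_om_pos n j)

lemma Amat_zero (n : ℕ) (l0 : ℂ) : Amat n l0 0 0 = 1 := by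
  unfold Amat
  rw [Finset.sum_eq_single 0]
  · rw [Finset.sum_eq_single 0]
    · norm_num
    · intro k _ hk
      simp [zero_pow hk]
    · simp
  · intro s _ hs
    apply Finset.sum_eq_zero
    intro k _
    simp [zero_pow hs]
  · simp

lemma wvec_zero (n : ℕ) (l0 : ℂ) (β : Idx n → ℂ) : wvec n l0 β 0 0 = β := by
  rw [wvec, Amat_zero, Matrix.one_mulVec]
lemma theta_zero (n : ℕ) (l0 : ℂ) (j : Fin n) : theta n l0 j 0 0 = 0 := by
  simp [theta]

lemma qbg_zero (n : ℕ) (l0 : ℂ) (j : Fin n) : qbg n l0 j 0 0 = (aa n l0 j : ℂ) := by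
  simp [qbg, theta_zero]

lemma normsq_eta (n : ℕ) : (∑ i, Complex.normSq (etaVec n i)) = 2 * n := by
  rw [Fintype.sum_sum_type]
  simp [etaVec, Complex.normSq_ofReal, Real.mul_self_sqrt (Nat.cast_nonneg n)]
  ring

lemma q1_eta (n : ℕ) (hn : 1 ≤ n) (l0 : ℂ) (him : 0 < l0.im) (j : Fin n) :
    q1 n l0 (etaVec n) j 0 0 =
      ((aa n l0 j + ((n : ℝ) + 1) * zeta n l0 * Real.sqrt n / n : ℝ) : ℂ) := by
  have ha := (aa_pos n l0 him j).ne'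
  have hn0 : (n : ℝ) ≠ 0 := by positivity
  rw [q1, qbg_zero]
  simp only [wvec_zero, normsq_eta, etaVec, Sum.elim_inl, Sum.elim_inr]
  rw [Complex.conj_ofReal]
  have haC : ((aa n l0 j : ℝ) : ℂ) ≠ 0 := by exact_mod_cast Complex.ofReal_ne_zero.mpr ha
  have hnC : ((n : ℕ) : ℂ) ≠ 0 := Nat.cast_ne_zero.mpr (by omega)
  push_cast
  field_simp [haC, hnC]
  ring_nf
  simp [Complex.I_sq]
  ring
lemma sum_aa (n : ℕ) (l0 : ℂ) :
    ∑ j, aa n l0 j = zeta n l0 * ∑ j : Fin n, 1 / Real.sin (om n ((j : ℕ) + 1)) := by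
  rw [Finset.mul_sum]
  exact Finset.sum_congr rfl fun j _ => by rw [aa, mul_one_div]

lemma csum_pos (n : ℕ) (hn : 1 ≤ n) :
    0 < ∑ j : Fin n, 1 / Real.sin (om n ((j : ℕ) + 1)) := by
  have : Nonempty (Fin n) := ⟨⟨0, hn⟩⟩
  exact Finset.sum_pos (fun j _ => div_pos one_pos (sin_om_pos n j)) Finset.univ_nonempty

lemma attained (n : ℕ) (hn : 1 ≤ n) (l0 : ℂ) (him : 0 < l0.im) :
    (∑ j, ‖q1 n l0 (etaVec n) j 0 0‖) / (∑ j, aa n l0 j) =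
      1 + ((n : ℝ) + 1) * Real.sqrt n / ∑ j : Fin n, 1 / Real.sin (om n ((j : ℕ) + 1)) := by
  have hC := csum_pos n hn
  have hz := zeta_pos n l0 him
  have hn0 : (0:ℝ) < n := by exact_mod_cast Nat.pos_of_ne_zero (by omega)
  have h1 : ∀ j : Fin n, ‖q1 n l0 (etaVec n) j 0 0‖ =
      aa n l0 j + ((n : ℝ) + 1) * zeta n l0 * Real.sqrt n / n := by
    intro j
    rw [q1_eta n hn l0 him j, Complex.norm_real, Real.norm_eq_abs]
    apply _root_.abs_of_nonneg
    have := (aa_pos n l0 him j).le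
    positivity
  rw [Finset.sum_congr rfl (fun j _ => h1 j), Finset.sum_add_distrib, Finset.sum_const,
    Finset.card_univ, Fintype.card_fin, nsmul_eq_mul, sum_aa]
  field_simp
lemma li_eta (n : ℕ) (hn : 1 ≤ n) (l0 : ℂ) (hre : l0.re = 0) (him : 0 < l0.im) :
    LinearIndependent ℂ ![etaVec n, xi0 n l0] := by
  rw [linearIndependent_fin2]
  constructor
  · intro h
    have := congrFun h (Sum.inl 0)
    simp [xi0] at this
  · intro a h
    have h0 := congrFun h (Sum.inl 0)
    have h1 := congrFun h (Sum.inr ⟨0, hn⟩)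
    simp only [etaVec, xi0, Sum.elim_inl, Sum.elim_inr, Pi.smul_apply, smul_eq_mul,
      mul_one, Matrix.cons_val_zero, Matrix.cons_val_one, Matrix.head_cons] at h0 h1
    set j0 : Fin n := ⟨0, hn⟩
    have himz : (zz0 n l0 + (bb n l0 j0 : ℂ)).im = zeta n l0 := by
      simp [zz0]
    have hzb : zz0 n l0 + (bb n l0 j0 : ℂ) ≠ 0 := by
      intro hc
      rw [hc, Complex.zero_im] at himz
      exact absurd himz.symm (zeta_pos n l0 him).ne'
    rw [h0] at h1
    rw [div_eq_inv_mul, ← mul_assoc] at h1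
    have h2 : Complex.I * (zz0 n l0 + (bb n l0 j0 : ℂ)) =
        (Real.sqrt n : ℂ) * (aa n l0 j0 : ℂ) := by
      field_simp at h1
      exact (mul_comm _ _).trans h1.symm
    have h3 := congrArg Complex.re h2
    rw [Complex.mul_re, himz, ← Complex.ofReal_mul, Complex.ofReal_re] at h3
    simp only [Complex.I_re, Complex.I_im, zero_mul, one_mul, zero_sub] at h3
    have hp : 0 ≤ Real.sqrt n * aa n l0 j0 :=
      mul_nonneg (Real.sqrt_nonneg _) (aa_pos n l0 him j0).le
    have := zeta_pos n l0 him
    linarith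
lemma ub (n : ℕ) (hn : 1 ≤ n) (l0 : ℂ) (him : 0 < l0.im) (β : Idx n → ℂ) (x t : ℝ) :
    (∑ j, ‖q1 n l0 β j x t‖) ≤
      (∑ j, aa n l0 j) + ((n : ℝ) + 1) * zeta n l0 * Real.sqrt n := by
  set w := wvec n l0 β x t with hw
  set N : ℝ := ∑ i, Complex.normSq (w i) with hNdef
  have hN0 : 0 ≤ N := Finset.sum_nonneg fun i _ => Complex.normSq_nonneg _
  have hz := zeta_pos n l0 him
  set A : ℝ := ‖w (Sum.inl 0)‖ with hA
  have hA0 : 0 ≤ A := norm_nonneg _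
  -- pointwise bound
  have hpt : ∀ j : Fin n, ‖q1 n l0 β j x t‖ ≤
      aa n l0 j +
        2 * ((n : ℝ) + 1) * zeta n l0 * A * ‖w (Sum.inr j)‖ / N := by
    intro j
    have ha := aa_pos n l0 him j
    rw [q1, norm_mul]
    rw [show wvec n l0 β x t = w from rfl, show (∑ i, Complex.normSq (w i)) = N from rfl]
    have hqbg : ‖qbg n l0 j x t‖ = aa n l0 j := by
      rw [qbg, norm_mul, Complex.norm_real, Real.norm_eq_abs, _root_.abs_of_nonneg ha.le, Complex.norm_exp]
      simp
    rw [hqbg]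
    have hnum : ((n : ℂ) + 1) = ((n + 1 : ℕ) : ℂ) := by push_cast; ring
    have habsF : ‖2 * Complex.I * ((n : ℂ) + 1) * ((zeta n l0 : ℝ) : ℂ) *
          w (Sum.inr j) * (starRingEnd ℂ) (w (Sum.inl 0)) /
          ((aa n l0 j : ℂ) * ((N : ℝ) : ℂ))‖ =
        2 * ((n : ℝ) + 1) * zeta n l0 * A * ‖w (Sum.inr j)‖ / (aa n l0 j * N) := by
      rw [norm_div, hnum]
      simp only [norm_mul, Complex.norm_I, Complex.norm_real, Real.norm_eq_abs, Complex.norm_conj,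
        Complex.norm_two, Complex.norm_natCast]
      rw [_root_.abs_of_nonneg hz.le, _root_.abs_of_nonneg ha.le, _root_.abs_of_nonneg hN0]
      push_cast
      ring
    have hF2 : ‖1 - 2 * Complex.I * ((n : ℂ) + 1) * ((zeta n l0 : ℝ) : ℂ) *
          w (Sum.inr j) * (starRingEnd ℂ) (w (Sum.inl 0)) /
          ((aa n l0 j : ℂ) * ((N : ℝ) : ℂ))‖ ≤
        1 + 2 * ((n : ℝ) + 1) * zeta n l0 * A * ‖w (Sum.inr j)‖ / (aa n l0 j * N) := by
      refine (norm_sub_le 1 _).trans ?_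
      rw [habsF]
      simp
    calc aa n l0 j * ‖1 - _‖ ≤ aa n l0 j *
          (1 + 2 * ((n : ℝ) + 1) * zeta n l0 * A * ‖w (Sum.inr j)‖ / (aa n l0 j * N)) :=
            mul_le_mul_of_nonneg_left hF2 ha.le
      _ = aa n l0 j + 2 * ((n : ℝ) + 1) * zeta n l0 * A * ‖w (Sum.inr j)‖ / N := by
          rw [mul_add, mul_one, mul_div_assoc', mul_div_mul_left _ _ ha.ne']
  -- sum the pointwise bound
  have hsum : (∑ j, ‖q1 n l0 β j x t‖) ≤
      (∑ j, aa n l0 j) +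
        2 * ((n : ℝ) + 1) * zeta n l0 * A * (∑ j, ‖w (Sum.inr j)‖) / N := by
    calc (∑ j, ‖q1 n l0 β j x t‖) ≤
        ∑ j, (aa n l0 j + 2 * ((n : ℝ) + 1) * zeta n l0 * A * ‖w (Sum.inr j)‖ / N) :=
          Finset.sum_le_sum fun j _ => hpt j
      _ = (∑ j, aa n l0 j) +
          2 * ((n : ℝ) + 1) * zeta n l0 * A * (∑ j, ‖w (Sum.inr j)‖) / N := by
        rw [Finset.sum_add_distrib]
        congr 1
        rw [Finset.mul_sum, Finset.sum_div]
  have key : 2 * ((n : ℝ) + 1) * zeta n l0 * A * (∑ j, ‖w (Sum.inr j)‖) / N ≤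
      ((n : ℝ) + 1) * zeta n l0 * Real.sqrt n := by
    rcases hN0.eq_or_lt with h | h
    · rw [← h, div_zero]
      positivity
    · set T : ℝ := ∑ j, ‖w (Sum.inr j)‖ with hT
      set S : ℝ := ∑ j, ‖w (Sum.inr j)‖ ^ 2 with hS
      have hT0 : 0 ≤ T := Finset.sum_nonneg fun j _ => norm_nonneg _
      have hS0 : 0 ≤ S := Finset.sum_nonneg fun j _ => sq_nonneg _
      have hNsplit : N = A ^ 2 + S := by
        rw [hNdef, Fintype.sum_sum_type]
        simp only [← Complex.sq_norm]
        rw [Fin.sum_univ_one]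
      have hTS : T ^ 2 ≤ n * S := by
        have := sq_sum_le_card_mul_sum_sq (s := Finset.univ)
          (f := fun j : Fin n => ‖w (Sum.inr j)‖)
        simpa using this
      have hTn : T ≤ Real.sqrt n * Real.sqrt S := by
        rw [← Real.sqrt_mul (Nat.cast_nonneg n)]
        calc T = Real.sqrt (T ^ 2) := (Real.sqrt_sq hT0).symm
          _ ≤ Real.sqrt ((n : ℝ) * S) := Real.sqrt_le_sqrt hTS
      have hAS : 2 * A * Real.sqrt S ≤ N := by
        rw [hNsplit]
        nlinarith [Real.sq_sqrt hS0, sq_nonneg (A - Real.sqrt S)]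
      rw [div_le_iff₀ h]
      have hs0 : 0 ≤ Real.sqrt S := Real.sqrt_nonneg _
      have c1 : 2 * ((n : ℝ) + 1) * zeta n l0 * A * T ≤
          2 * ((n : ℝ) + 1) * zeta n l0 * A * (Real.sqrt n * Real.sqrt S) := by
        have hc : 0 ≤ 2 * ((n : ℝ) + 1) * zeta n l0 * A := by positivity
        exact mul_le_mul_of_nonneg_left hTn hc
      have c2 : 2 * ((n : ℝ) + 1) * zeta n l0 * A * (Real.sqrt n * Real.sqrt S) =
          ((n : ℝ) + 1) * zeta n l0 * Real.sqrt n * (2 * A * Real.sqrt S) := by ring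
      have c3 : ((n : ℝ) + 1) * zeta n l0 * Real.sqrt n * (2 * A * Real.sqrt S) ≤
          ((n : ℝ) + 1) * zeta n l0 * Real.sqrt n * N := by
        have hc : 0 ≤ ((n : ℝ) + 1) * zeta n l0 * Real.sqrt n := by positivity
        exact mul_le_mul_of_nonneg_left hAS hc
      linarith
  linarith
/-- `1 + (n+1)√n/(Σ_j csc ω_j)` is the greatest value of
`‖q^{[1]}_β(x,t)‖₁/‖a‖₁` over all admissible `β` and `(x,t) ∈ ℝ²`, and it is attained
at `β = η = (√n, i, …, i)ᵀ` and `(x,t) = (0,0)`. -/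
theorem stmt18 (n : ℕ) (hn : 1 ≤ n) (l0 : ℂ) (hre : l0.re = 0) (him : 0 < l0.im) :
    IsGreatest
      {r : ℝ | ∃ (β : Idx n → ℂ) (x t : ℝ),
        LinearIndependent ℂ ![β, xi0 n l0] ∧
        r = (∑ j, ‖q1 n l0 β j x t‖) / ∑ j, aa n l0 j}
      (1 + ((n : ℝ) + 1) * Real.sqrt n / ∑ j : Fin n, 1 / Real.sin (om n ((j : ℕ) + 1))) ∧
    LinearIndependent ℂ ![etaVec n, xi0 n l0] ∧
    (∑ j, ‖q1 n l0 (etaVec n) j 0 0‖) / (∑ j, aa n l0 j) =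
      1 + ((n : ℝ) + 1) * Real.sqrt n / ∑ j : Fin n, 1 / Real.sin (om n ((j : ℕ) + 1)) := by
  have hC := csum_pos n hn
  have hz := zeta_pos n l0 him
  have hSa : ∑ j, aa n l0 j =
      zeta n l0 * ∑ j : Fin n, 1 / Real.sin (om n ((j : ℕ) + 1)) := sum_aa n l0
  have hSapos : 0 < ∑ j, aa n l0 j := by rw [hSa]; positivity
  refine ⟨⟨⟨etaVec n, 0, 0, li_eta n hn l0 hre him, (attained n hn l0 him).symm⟩, ?_⟩,
    li_eta n hn l0 hre him, attained n hn l0 him⟩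
  rintro r ⟨β, x, t, -, rfl⟩
  rw [div_le_iff₀ hSapos]
  have h := ub n hn l0 him β x t
  have hM : (1 + ((n : ℝ) + 1) * Real.sqrt n / ∑ j : Fin n, 1 / Real.sin (om n ((j : ℕ) + 1))) *
      (∑ j, aa n l0 j) = (∑ j, aa n l0 j) + ((n : ℝ) + 1) * zeta n l0 * Real.sqrt n := by
    rw [hSa]
    field_simp
  linarith

end
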